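/- arXiv:1405.5024 — 6 statements merged into one kernel-verified Lean document; each statement's English description precedes it below -/
import Mathlib

section
/- For every bijection G : A → {1,...,m} satisfying G(w) < G(w') whenever P(W=w) > P(W=w'), and for every n ∈ {1,...,m}, P(G(W) ≤ n) equals the maximum of ∑_{i=1}^n P(W = w_i) over all choices of n distinct elements w_1,...,w_n of A. -/
/-- For a most-likely-first strategy `G`, the probability of
identification within `n` guesses is the greatest possible total probability
of any set of `n` distinct strings. -/
theorem most_likely_first_cdf_is_max
    {A : Type*} [Fintype A] {m : ℕ} (hm : Fintype.card A = m)
    (p : A → ℝ) (hp : ∀ a, 0 ≤ p a) (hsum : ∑ a, p a = 1)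
    (G : A ≃ Fin m) (hG : ∀ w w', p w > p w' → G w < G w')
    (n : ℕ) (hn1 : 1 ≤ n) (hnm : n ≤ m) :
    IsGreatest ((fun T : Finset A => ∑ w ∈ T, p w) ''
        {T : Finset A | T.card = n})
      (∑ w ∈ Finset.univ.filter (fun w => (G w : ℕ) < n), p w) := by
  classical
  set S := Finset.univ.filter (fun w => (G w : ℕ) < n) with hS
  have hScard : S.card = n := by
    have himg : S = (Finset.univ.filter (fun i : Fin m => (i : ℕ) < n)).image G.symm := by
      ext w
      simp only [hS, Finset.mem_filter, Finset.mem_univ, true_and, Finset.mem_image]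
      constructor
      · intro h; exact ⟨G w, h, by simp⟩
      · rintro ⟨i, hi, rfl⟩; simpa using hi
    rw [himg, Finset.card_image_of_injective _ G.symm.injective]
    have : (Finset.univ.filter (fun i : Fin m => (i : ℕ) < n)).card
        = ((Finset.range m).filter (fun i => i < n)).card := by
      refine Finset.card_bij (fun i _ => (i : ℕ)) ?_ ?_ ?_
      · intro i hi
        simp only [Finset.mem_filter, Finset.mem_univ, true_and] at hi
        simp [Finset.mem_filter, Finset.mem_range, i.isLt, hi]
      · intro i _ j _ h; exact Fin.ext h
      · intro j hj
        simp only [Finset.mem_filter, Finset.mem_range] at hj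
        exact ⟨⟨j, hj.1⟩, by simp [hj.2], rfl⟩
    rw [this]
    have : (Finset.range m).filter (fun i => i < n) = Finset.range n := by
      ext i; simp only [Finset.mem_filter, Finset.mem_range]; omega
    rw [this, Finset.card_range]
  constructor
  · exact ⟨S, hScard, rfl⟩
  · rintro x ⟨T, hT, rfl⟩
    simp only [Set.mem_setOf_eq] at hT
    have hcard : (T \ S).card = (S \ T).card := by
      have h1 := Finset.card_sdiff_add_card_inter T S
      have h2 := Finset.card_sdiff_add_card_inter S T
      rw [Finset.inter_comm] at h2
      omega
    have key : ∀ w ∈ T \ S, ∀ w' ∈ S \ T, p w ≤ p w' := by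
      intro w hw w' hw'
      by_contra h
      push_neg at h
      have hlt := hG w w' h
      simp only [hS, Finset.mem_sdiff, Finset.mem_filter, Finset.mem_univ, true_and] at hw hw'
      rw [Fin.lt_iff_val_lt_val] at hlt
      omega
    have hdiff : ∑ w ∈ T \ S, p w ≤ ∑ w ∈ S \ T, p w := by
      have e : ↥(T \ S) ≃ ↥(S \ T) := Finset.equivOfCardEq hcard
      calc ∑ w ∈ T \ S, p w = ∑ x : ↥(T \ S), p x := (Finset.sum_coe_sort _ _).symm
        _ ≤ ∑ x : ↥(T \ S), p (e x) := by
            apply Finset.sum_le_sum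
            intro x _
            exact key x x.2 (e x) (e x).2
        _ = ∑ y : ↥(S \ T), p y := Equiv.sum_comp e (fun y => p (y : A))
        _ = ∑ w ∈ S \ T, p w := Finset.sum_coe_sort _ _
    have h1 : ∑ w ∈ T, p w = ∑ w ∈ T ∩ S, p w + ∑ w ∈ T \ S, p w :=
      (Finset.sum_inter_add_sum_sdiff T S p).symm
    have h2 : ∑ w ∈ S, p w = ∑ w ∈ S ∩ T, p w + ∑ w ∈ S \ T, p w :=
      (Finset.sum_inter_add_sum_sdiff S T p).symm
    show ∑ w ∈ T, p w ≤ ∑ w ∈ S, p w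
    rw [h1]
    calc ∑ w ∈ T ∩ S, p w + ∑ w ∈ T \ S, p w
        ≤ ∑ w ∈ T ∩ S, p w + ∑ w ∈ S \ T, p w := by linarith
      _ = ∑ w ∈ S ∩ T, p w + ∑ w ∈ S \ T, p w := by rw [Finset.inter_comm]
      _ = ∑ w ∈ S, p w := Finset.sum_inter_add_sum_sdiff S T p
end

section
/- There exist a finite alphabet A, an integer V=2 with U=1, and independent A-valued random variables W^(1), W^(2), such that no multi-user strategy S : {1,2} × A → {1,...,2|A|} is stochastically dominant: for every strategy S there exists another strategy S' and an n with P(G_S(1,2,(W^(1),W^(2))) ≤ n) < P(G_{S'}(1,2,(W^(1),W^(2))) ≤ n). Concretely, one may take A = {0,1,2} with P(W^(1)=0)=0.6, P(W^(1)=1)=0.25, P(W^(1)=2)=0.15 and P(W^(2)=0)=0.5, P(W^(2)=1)=0.4, P(W^(2)=2)=0.1. -/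
/-- Probability mass function of user 1's string. -/
noncomputable def p1 : Fin 3 → ℝ := ![0.6, 0.25, 0.15]

/-- Probability mass function of user 2's string. -/
noncomputable def p2 : Fin 3 → ℝ := ![0.5, 0.4, 0.1]

/-- `P(G_S(1,2,(W¹,W²)) ≤ n)` for a multi-user strategy
`S : Fin 2 × Fin 3 ≃ Fin 6` with `U = 1`, `V = 2`: the number of guesses made
until the first string is identified is the (1-indexed) position of the
earlier of the two correct (user, string) pairs in the ordering `S`. -/
noncomputable def cdfGS (S : (Fin 2 × Fin 3) ≃ Fin 6) (n : ℕ) : ℝ :=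
  ∑ w : Fin 3 × Fin 3,
    if min ((S (0, w.1)) : ℕ) ((S (1, w.2)) : ℕ) + 1 ≤ n then
      p1 w.1 * p2 w.2 else 0

/-- Scaled (×100) natural-number version of `p1`. -/
def m1 : Fin 3 → ℕ := ![60, 25, 15]

/-- Scaled (×100) natural-number version of `p2`. -/
def m2 : Fin 3 → ℕ := ![50, 40, 10]

lemma p_mul_eq (a b : Fin 3) : p1 a * p2 b = ((m1 a * m2 b : ℕ) : ℝ) / 10000 := by
  fin_cases a <;> fin_cases b <;> norm_num [p1, p2, m1, m2]

/-- Scaled (×10000) natural-number version of `cdfGS`. -/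
def cdfN (S : (Fin 2 × Fin 3) ≃ Fin 6) (n : ℕ) : ℕ :=
  ∑ w : Fin 3 × Fin 3,
    if min ((S (0, w.1)) : ℕ) ((S (1, w.2)) : ℕ) + 1 ≤ n then
      m1 w.1 * m2 w.2 else 0

lemma cdfGS_eq (S : (Fin 2 × Fin 3) ≃ Fin 6) (n : ℕ) :
    cdfGS S n = ((cdfN S n : ℕ) : ℝ) / 10000 := by
  unfold cdfGS cdfN
  push_cast
  rw [Finset.sum_div]
  refine Finset.sum_congr rfl fun w _ => ?_
  split
  · rw [p_mul_eq]; push_cast; ring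
  · norm_num

/-- `cdfN S 1` as a function of the first queried pair. -/
def N1 (x : Fin 2 × Fin 3) : ℕ :=
  ∑ w : Fin 3 × Fin 3,
    if ((0 : Fin 2), w.1) = x ∨ ((1 : Fin 2), w.2) = x then m1 w.1 * m2 w.2 else 0

/-- `cdfN S 2` as a function of the first two queried pairs. -/
def N2 (x y : Fin 2 × Fin 3) : ℕ :=
  ∑ w : Fin 3 × Fin 3,
    if ((0 : Fin 2), w.1) = x ∨ ((0 : Fin 2), w.1) = y ∨
       ((1 : Fin 2), w.2) = x ∨ ((1 : Fin 2), w.2) = y then m1 w.1 * m2 w.2 else 0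

lemma apply_eq_iff (S : (Fin 2 × Fin 3) ≃ Fin 6) (p : Fin 2 × Fin 3) (k : Fin 6) :
    ((S p : ℕ) = (k : ℕ)) ↔ p = S.symm k := by
  rw [← Fin.ext_iff, ← Equiv.eq_symm_apply]

lemma cdfN_one (S : (Fin 2 × Fin 3) ≃ Fin 6) : cdfN S 1 = N1 (S.symm 0) := by
  unfold cdfN N1
  refine Finset.sum_congr rfl fun w _ => ?_
  refine if_congr ?_ rfl rfl
  have h1 := apply_eq_iff S (0, w.1) 0
  have h2 := apply_eq_iff S (1, w.2) 0
  simp only [Fin.val_zero] at h1 h2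
  rw [← h1, ← h2]
  omega

lemma cdfN_two (S : (Fin 2 × Fin 3) ≃ Fin 6) :
    cdfN S 2 = N2 (S.symm 0) (S.symm 1) := by
  unfold cdfN N2
  refine Finset.sum_congr rfl fun w _ => ?_
  refine if_congr ?_ rfl rfl
  have h1 := apply_eq_iff S (0, w.1) 0
  have h2 := apply_eq_iff S (0, w.1) 1
  have h3 := apply_eq_iff S (1, w.2) 0
  have h4 := apply_eq_iff S (1, w.2) 1
  simp only [Fin.val_zero, Fin.val_one] at h1 h2 h3 h4
  rw [← h1, ← h2, ← h3, ← h4]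
  omega

lemma key : ∀ x y : Fin 2 × Fin 3, x ≠ y → N1 x < 6000 ∨ N2 x y < 9000 := by decide

/-- The strategy querying user 1's strings first (in order 0,1,2). -/
def SA : (Fin 2 × Fin 3) ≃ Fin 6 where
  toFun p := ![![0, 1, 2], ![3, 4, 5]] p.1 p.2
  invFun k := ![((0 : Fin 2), (0 : Fin 3)), (0, 1), (0, 2), (1, 0), (1, 1), (1, 2)] k
  left_inv := by decide
  right_inv := by decide

/-- The strategy querying user 2's strings first (in order 0,1,2). -/
def SC : (Fin 2 × Fin 3) ≃ Fin 6 where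
  toFun p := ![![3, 4, 5], ![0, 1, 2]] p.1 p.2
  invFun k := ![((1 : Fin 2), (0 : Fin 3)), (1, 1), (1, 2), (0, 0), (0, 1), (0, 2)] k
  left_inv := by decide
  right_inv := by decide

lemma cdfN_SA : cdfN SA 1 = 6000 := by
  rw [cdfN_one]; decide

lemma cdfN_SC : cdfN SC 2 = 9000 := by
  rw [cdfN_two]; decide

/-- For the concrete pair of sources `p1`, `p2` (with `U = 1`,
`V = 2`), no multi-user strategy is stochastically dominant: for every
strategy `S` there is a strategy `S'` and an `n` with
`P(G_S ≤ n) < P(G_{S'} ≤ n)`. -/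
theorem no_stochastically_dominant_multiuser_strategy :
    ∀ S : (Fin 2 × Fin 3) ≃ Fin 6,
      ∃ (S' : (Fin 2 × Fin 3) ≃ Fin 6) (n : ℕ),
        cdfGS S n < cdfGS S' n := by
  intro S
  have hne : S.symm 0 ≠ S.symm 1 := by
    intro h
    have := S.symm.injective h
    exact absurd this (by decide)
  rcases key (S.symm 0) (S.symm 1) hne with h | h
  · refine ⟨SA, 1, ?_⟩
    rw [cdfGS_eq, cdfGS_eq, cdfN_SA, cdfN_one]
    have h' : ((N1 (S.symm 0) : ℕ) : ℝ) < ((6000 : ℕ) : ℝ) := by exact_mod_cast h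
    exact div_lt_div_of_pos_right h' (by norm_num)
  · refine ⟨SC, 2, ?_⟩
    rw [cdfGS_eq, cdfGS_eq, cdfN_SC, cdfN_two]
    have h' : ((N2 (S.symm 0) (S.symm 1) : ℕ) : ℝ) < ((9000 : ℕ) : ℝ) := by exact_mod_cast h
    exact div_lt_div_of_pos_right h' (by norm_num)
end

section
/- Let W^(1),...,W^(V) be independent random variables on a finite set A^k, let G^(v) be an optimal (most-likely-first) strategy for W^(v), and define G_opt(U,V,W) = U-min(G^(1)(W^(1)),...,G^(V)(W^(V))). Then for any multi-user strategy S, G_opt(U,V,W) is stochastically dominated by G_S(U,V,W): P(G_opt(U,V,W) ≤ n) ≥ P(G_S(U,V,W) ≤ n) for all n ∈ {1,...,m^k}. -/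
/-- `uminN U x` : the `U`-th smallest component (1-indexed, with multiplicity)
of the vector of naturals `x : Fin V → ℕ`. -/
def uminN {V : ℕ} (U : ℕ) (x : Fin V → ℕ) : ℕ :=
  ((Finset.univ.val.map x).sort (· ≤ ·)).getD (U - 1) 0

/-- `NS S v n` : the number of queries to user `v` among the first `n`
queries of the multi-user strategy `S` (positions are 1-indexed). -/
def NS {V M : ℕ} {X : Type*} [Fintype X] [DecidableEq X]
    (S : Fin V × X ≃ Fin (V * M)) (v : Fin V) (n : ℕ) : ℕ :=
  (Finset.univ.filter (fun w : X => ((S (v, w)) : ℕ) + 1 ≤ n)).card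

/-- `T S U w` : the number of the query at which the `U`-th string is
identified, i.e. the `U`-th smallest of the (1-indexed) positions of the pairs
`(v, w v)` in the ordering `S`. -/
def TT {V M : ℕ} {X : Type*} [Fintype X] [DecidableEq X]
    (S : Fin V × X ≃ Fin (V * M)) (U : ℕ) (w : Fin V → X) : ℕ :=
  uminN U (fun v => ((S (v, w v)) : ℕ) + 1)

/-- `GS S U w` : the multi-user guesswork of the strategy `S`, the total
number of queries made until `U` of the `V` strings are identified, querying
each user `v` only until its string is found or `U` strings are found. -/
def GS {V M : ℕ} {X : Type*} [Fintype X] [DecidableEq X]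
    (S : Fin V × X ≃ Fin (V * M)) (U : ℕ) (w : Fin V → X) : ℕ :=
  ∑ v : Fin V, NS S v (min (((S (v, w v)) : ℕ) + 1) (TT S U w))

/-- `Gopt Gv U w = U-min(G⁽¹⁾(w⁽¹⁾),...,G⁽ᵛ⁾(w⁽ᵛ⁾))` for single-user
strategies `Gv v` (1-indexed). -/
def Gopt {V M : ℕ} {X : Type*} [Fintype X]
    (Gv : Fin V → (X ≃ Fin M)) (U : ℕ) (w : Fin V → X) : ℕ :=
  uminN U (fun v => ((Gv v (w v)) : ℕ) + 1)

section StochDomHelpers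

lemma sorted_getElem_le_iff {l : List ℕ} (hs : l.Pairwise (· ≤ ·)) {i n : ℕ} (hi : i < l.length) :
    l[i] ≤ n ↔ i + 1 ≤ l.countP (fun b => b ≤ n) := by
  constructor
  · intro h
    have hd := List.take_append_drop (i+1) l
    have h1 : (l.take (i+1)).countP (fun b => b ≤ n) = (l.take (i+1)).length := by
      rw [List.countP_eq_length]
      intro a ha
      obtain ⟨j, hj, rfl⟩ := List.mem_iff_getElem.1 ha
      have hj' : j < l.length := lt_of_lt_of_le hj (by simp [List.length_take])
      rw [List.getElem_take]
      have hji : j ≤ i := by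
        have := hj; simp [List.length_take] at this; omega
      simpa using le_trans (hs.rel_get_of_le (a := ⟨j, hj'⟩) (b := ⟨i, hi⟩) hji) h
    have h2 : (l.take (i+1)).length = i + 1 := by simp [List.length_take]; omega
    calc i + 1 = (l.take (i+1)).countP (fun b => b ≤ n) := by rw [h1, h2]
      _ ≤ l.countP (fun b => b ≤ n) := by
          conv_rhs => rw [← hd]
          rw [List.countP_append]; omega
  · intro h
    by_contra hc
    have hd := List.take_append_drop i l
    have h0 : (l.drop i).countP (fun b => b ≤ n) = 0 := by
      rw [List.countP_eq_zero]
      intro a ha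
      obtain ⟨j, hj, rfl⟩ := List.mem_iff_getElem.1 ha
      rw [List.getElem_drop]
      have hij : i + j < l.length := by
        have := hj; simp [List.length_drop] at this; omega
      have : l[i] ≤ l[i+j] := by
        simpa using hs.rel_get_of_le (a := ⟨i, hi⟩) (b := ⟨i+j, hij⟩) (by simp)
      simp only [decide_eq_true_eq]
      omega
    have := List.countP_le_length (p := fun b => decide (b ≤ n)) (l := l.take i)
    have hlen : (l.take i).length = i := by simp [List.length_take]; omega
    conv at h => rw [← hd]
    rw [List.countP_append, h0] at h
    omega

lemma uminN_le_iff {V : ℕ} {U n : ℕ} (hU1 : 1 ≤ U) (hUV : U ≤ V) (x : Fin V → ℕ) :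
    uminN U x ≤ n ↔ U ≤ (Finset.univ.filter (fun v => x v ≤ n)).card := by
  classical
  set m := Finset.univ.val.map x with hm
  set l := m.sort (· ≤ ·) with hl
  have hlen : l.length = V := by
    rw [hl, Multiset.length_sort, hm, Multiset.card_map]; simp
  have hi : U - 1 < l.length := by omega
  have h1 : uminN U x = l[U-1] := List.getD_eq_getElem l 0 hi
  have h2 : (Finset.univ.filter (fun v => x v ≤ n)).card = l.countP (fun b => b ≤ n) := by
    have h0 : (Finset.univ.filter (fun v : Fin V => x v ≤ n)).card
        = Multiset.countP (fun v => x v ≤ n) Finset.univ.val := by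
      rw [Multiset.countP_eq_card_filter]; rfl
    rw [h0]
    have h3 : Multiset.countP (fun v : Fin V => x v ≤ n) Finset.univ.val
        = Multiset.countP (· ≤ n) m := by
      rw [hm, Multiset.countP_map, Multiset.countP_eq_card_filter]
    rw [h3, ← Multiset.sort_eq (s := m) (r := (· ≤ ·)), ← hl, Multiset.coe_countP]
  have hsort : l.Pairwise (· ≤ ·) := by rw [hl]; exact Multiset.pairwise_sort _ _
  rw [h1, h2, sorted_getElem_le_iff hsort hi]
  omega

lemma sum_split {V : ℕ} {M' : Type*} [AddCommMonoid M'] (v0 : Fin V) (F : Fin V → M') :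
    ∑ v, F v = F v0 + ∑ j : {j : Fin V // j ≠ v0}, F j := by
  rw [← Finset.sum_erase_add Finset.univ F (Finset.mem_univ v0), add_comm]
  congr 1
  exact Finset.sum_subtype (Finset.univ.erase v0) (by simp) F

lemma prod_split {V : ℕ} {M' : Type*} [CommMonoid M'] (v0 : Fin V) (F : Fin V → M') :
    ∏ v, F v = F v0 * ∏ j : {j : Fin V // j ≠ v0}, F j := by
  rw [← Finset.prod_erase_mul Finset.univ F (Finset.mem_univ v0), mul_comm]
  congr 1
  exact Finset.prod_subtype (Finset.univ.erase v0) (by simp) F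

lemma sum_compare {α : Type*} [DecidableEq α] {A B : Finset α} {f : α → ℝ}
    (hf : ∀ a, 0 ≤ f a) (hcard : A.card ≤ B.card)
    (hkey : ∀ a ∈ A, a ∉ B → ∀ b ∈ B, b ∉ A → f a ≤ f b) :
    ∑ a ∈ A, f a ≤ ∑ b ∈ B, f b := by
  rw [← Finset.sum_inter_add_sum_sdiff A B f, ← Finset.sum_inter_add_sum_sdiff B A f,
    Finset.inter_comm B A]
  refine add_le_add le_rfl ?_
  have hAB : (A \ B).card ≤ (B \ A).card := by
    have h1 := Finset.card_inter_add_card_sdiff A B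
    have h2 := Finset.card_inter_add_card_sdiff B A
    rw [Finset.inter_comm B A] at h2
    omega
  obtain ⟨C, hCsub, hCcard⟩ := Finset.exists_subset_card_eq hAB
  have e : {x // x ∈ A \ B} ≃ {x // x ∈ C} := Finset.equivOfCardEq hCcard.symm
  calc ∑ a ∈ A \ B, f a = ∑ x : {x // x ∈ A \ B}, f x := (Finset.sum_coe_sort _ f).symm
    _ = ∑ y : {x // x ∈ C}, f (e.symm y) := (Equiv.sum_comp e.symm (fun x => f x.1)).symm
    _ ≤ ∑ y : {x // x ∈ C}, f y := by
        refine Finset.sum_le_sum fun y _ => ?_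
        have ha := (e.symm y).2
        have hb := hCsub y.2
        rw [Finset.mem_sdiff] at ha hb
        exact hkey _ ha.1 ha.2 _ hb.1 hb.2
    _ = ∑ y ∈ C, f y := Finset.sum_coe_sort _ f
    _ ≤ ∑ b ∈ B \ A, f b := Finset.sum_le_sum_of_subset_of_nonneg hCsub (fun b _ _ => hf b)

/-- The event that at least `U` of the coordinatewise guess values are `≤ n`. -/
def EVfin {V : ℕ} {X : Type*} [Fintype X] [DecidableEq X] (U n : ℕ)
    (f : Fin V → X → ℕ) : Finset (Fin V → X) :=
  Finset.univ.filter (fun w => U ≤ (Finset.univ.filter (fun v => f v (w v) ≤ n)).card)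

/-- Probability of the event `EVfin`. -/
def PP {V : ℕ} {X : Type*} [Fintype X] [DecidableEq X] (p : Fin V → X → ℝ)
    (U n : ℕ) (f : Fin V → X → ℕ) : ℝ :=
  ∑ w ∈ EVfin U n f, ∏ v, p v (w v)

/-- Marginal probability of guessing within `n` tries. -/
def QQ {V : ℕ} {X : Type*} [Fintype X] [DecidableEq X] (p : Fin V → X → ℝ)
    (n : ℕ) (v : Fin V) (h : X → ℕ) : ℝ :=
  ∑ a ∈ Finset.univ.filter (fun a => h a ≤ n), p v a

lemma PP_eq {V : ℕ} {X : Type*} [Fintype X] [DecidableEq X] (p : Fin V → X → ℝ)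
    (U n : ℕ) (f : Fin V → X → ℕ) (v0 : Fin V) :
    PP p U n f = ∑ r : ({j : Fin V // j ≠ v0} → X),
      (∑ a : X, if U ≤ (if f v0 a ≤ n then 1 else 0)
          + (Finset.univ.filter (fun j : {j : Fin V // j ≠ v0} => f j.1 (r j) ≤ n)).card
        then p v0 a else 0)
      * ∏ j : {j : Fin V // j ≠ v0}, p j.1 (r j) := by
  classical
  rw [PP, EVfin, Finset.sum_filter]
  rw [← Equiv.sum_comp (Equiv.piSplitAt v0 (fun _ => X)).symm
      (fun w => if U ≤ (Finset.univ.filter (fun v => f v (w v) ≤ n)).card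
        then ∏ v, p v (w v) else 0)]
  rw [Fintype.sum_prod_type, Finset.sum_comm]
  refine Finset.sum_congr rfl fun r _ => ?_
  rw [Finset.sum_mul]
  refine Finset.sum_congr rfl fun a _ => ?_
  set w := (Equiv.piSplitAt v0 (fun _ => X)).symm (a, r) with hw
  have hw0 : w v0 = a := by simp [hw, Equiv.piSplitAt_symm_apply]
  have hwj : ∀ (j : Fin V) (hj : j ≠ v0), w j = r ⟨j, hj⟩ := by
    intro j hj; simp [hw, Equiv.piSplitAt_symm_apply, hj]
  have hcard : (Finset.univ.filter (fun v => f v (w v) ≤ n)).card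
      = (if f v0 a ≤ n then 1 else 0)
        + (Finset.univ.filter (fun j : {j : Fin V // j ≠ v0} => f j.1 (r j) ≤ n)).card := by
    rw [Finset.card_filter, Finset.card_filter, sum_split v0]
    congr 1
    · rw [hw0]
    · refine Finset.sum_congr rfl fun j _ => ?_
      rw [hwj j.1 j.2]
  have hprod : ∏ v, p v (w v) = p v0 a * ∏ j : {j : Fin V // j ≠ v0}, p j.1 (r j) := by
    rw [prod_split v0, hw0]
    congr 1
    refine Finset.prod_congr rfl fun j _ => ?_
    rw [hwj j.1 j.2]
  rw [hcard, hprod, ite_mul, zero_mul]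

lemma PP_swap {V : ℕ} {X : Type*} [Fintype X] [DecidableEq X] (p : Fin V → X → ℝ)
    (hp : ∀ v w, 0 ≤ p v w) (U n : ℕ) (f : Fin V → X → ℕ) (v0 : Fin V) (g0 : X → ℕ)
    (hq : QQ p n v0 (f v0) ≤ QQ p n v0 g0) :
    PP p U n f ≤ PP p U n (Function.update f v0 g0) := by
  classical
  rw [PP_eq p U n f v0, PP_eq p U n (Function.update f v0 g0) v0]
  refine Finset.sum_le_sum fun r _ => ?_
  have hcnt : (Finset.univ.filter
        (fun j : {j : Fin V // j ≠ v0} => Function.update f v0 g0 j.1 (r j) ≤ n))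
      = (Finset.univ.filter (fun j : {j : Fin V // j ≠ v0} => f j.1 (r j) ≤ n)) := by
    refine Finset.filter_congr fun j _ => ?_
    rw [Function.update_of_ne j.2]
  rw [hcnt, Function.update_self]
  set c := (Finset.univ.filter (fun j : {j : Fin V // j ≠ v0} => f j.1 (r j) ≤ n)).card with hc
  refine mul_le_mul_of_nonneg_right ?_ (Finset.prod_nonneg fun j _ => hp j.1 _)
  rcases le_or_gt U c with h1 | h1
  · apply le_of_eq
    refine Finset.sum_congr rfl fun a _ => ?_
    rw [if_pos (le_trans h1 (Nat.le_add_left c _)), if_pos (le_trans h1 (Nat.le_add_left c _))]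
  · rcases eq_or_lt_of_le (Nat.lt_iff_add_one_le.mp h1) with h2 | h2
    · have e1 : ∀ (h0 : X → ℕ),
          (∑ a : X, if U ≤ (if h0 a ≤ n then 1 else 0) + c then p v0 a else 0)
          = QQ p n v0 h0 := by
        intro h0
        rw [QQ, Finset.sum_filter]
        refine Finset.sum_congr rfl fun a _ => ?_
        by_cases h : h0 a ≤ n
        · rw [if_pos (by simp [h]; omega), if_pos h]
        · rw [if_neg (by simp [h]; omega), if_neg h]
      rw [e1, e1]; exact hq
    · apply le_of_eq
      refine Finset.sum_congr rfl fun a _ => ?_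
      rw [if_neg (by split_ifs <;> omega), if_neg (by split_ifs <;> omega)]

lemma PP_mono {V : ℕ} {X : Type*} [Fintype X] [DecidableEq X] (p : Fin V → X → ℝ)
    (hp : ∀ v w, 0 ≤ p v w) (U n : ℕ) (f g : Fin V → X → ℕ)
    (hq : ∀ v, QQ p n v (f v) ≤ QQ p n v (g v)) :
    PP p U n f ≤ PP p U n g := by
  classical
  have H : ∀ s : Finset (Fin V),
      PP p U n f ≤ PP p U n (fun v => if v ∈ s then g v else f v) := by
    intro s
    induction s using Finset.induction_on with
    | empty => simp
    | @insert v0 s hv0 ih =>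
        have heq : (fun v => if v ∈ insert v0 s then g v else f v)
            = Function.update (fun v => if v ∈ s then g v else f v) v0 (g v0) := by
          funext v
          by_cases hv : v = v0
          · subst hv; simp [Function.update_self]
          · rw [Function.update_of_ne hv]; simp [Finset.mem_insert, hv]
        rw [heq]
        refine le_trans ih (PP_swap p hp U n _ v0 (g v0) ?_)
        simpa [hv0] using hq v0
  have := H Finset.univ
  simpa using this

end StochDomHelpers


lemma GS_mem {V M : ℕ} {X : Type*} [Fintype X] [DecidableEq X]
    (S : Fin V × X ≃ Fin (V * M)) (U : ℕ) (hU1 : 1 ≤ U) (hUV : U ≤ V)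
    (w : Fin V → X) (n : ℕ) (h : GS S U w ≤ n) :
    U ≤ (Finset.univ.filter (fun v => NS S v (((S (v, w v)) : ℕ) + 1) ≤ n)).card := by
  classical
  have hT : U ≤ (Finset.univ.filter
      (fun v => ((S (v, w v)) : ℕ) + 1 ≤ TT S U w)).card := by
    rw [← uminN_le_iff hU1 hUV]
    exact le_rfl
  refine le_trans hT (Finset.card_le_card ?_)
  intro v hv
  rw [Finset.mem_filter] at hv ⊢
  refine ⟨hv.1, ?_⟩
  have h1 : NS S v (((S (v, w v)) : ℕ) + 1)
      = NS S v (min (((S (v, w v)) : ℕ) + 1) (TT S U w)) := by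
    rw [min_eq_left hv.2]
  rw [h1]
  refine le_trans ?_ h
  rw [GS]
  exact Finset.single_le_sum
    (f := fun v => NS S v (min (((S (v, w v)) : ℕ) + 1) (TT S U w)))
    (fun i _ => Nat.zero_le _) (Finset.mem_univ v)

lemma single_user {V M : ℕ} {X : Type*} [Fintype X] [DecidableEq X]
    (hM : Fintype.card X = M) (p : Fin V → X → ℝ) (hp : ∀ v w, 0 ≤ p v w)
    (Gv : Fin V → (X ≃ Fin M))
    (hGv : ∀ v w w', p v w > p v w' → Gv v w < Gv v w')
    (S : Fin V × X ≃ Fin (V * M)) (v : Fin V) (n : ℕ) :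
    QQ p n v (fun a => NS S v (((S (v, a)) : ℕ) + 1))
      ≤ QQ p n v (fun a => ((Gv v a) : ℕ) + 1) := by
  classical
  rw [QQ, QQ]
  set A := Finset.univ.filter (fun a : X => NS S v (((S (v, a)) : ℕ) + 1) ≤ n) with hA
  set B := Finset.univ.filter (fun a : X => ((Gv v a) : ℕ) + 1 ≤ n) with hB
  refine sum_compare (fun a => hp v a) ?_ ?_
  · -- card A ≤ card B
    have hBcard : B.card = min n M := by
      have h1 : B.card = (Finset.univ.filter (fun i : Fin M => (i : ℕ) + 1 ≤ n)).card := by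
        refine Finset.card_bij (fun a _ => Gv v a) ?_ ?_ ?_
        · intro a ha
          rw [hB, Finset.mem_filter] at ha
          simpa using ha.2
        · intro a _ b _ hab
          exact (Gv v).injective hab
        · intro b hb
          refine ⟨(Gv v).symm b, ?_, by simp⟩
          rw [hB, Finset.mem_filter]
          simp only [Finset.mem_filter] at hb
          simpa using hb.2
      have h2 : (Finset.univ.filter (fun i : Fin M => (i : ℕ) + 1 ≤ n)).card
          = (Finset.range (min n M)).card := by
        refine Finset.card_bij (fun i _ => (i : ℕ)) ?_ ?_ ?_
        · intro i hi
          simp only [Finset.mem_filter] at hi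
          have := i.isLt
          simp only [Finset.mem_range, lt_min_iff]
          omega
        · intro i _ j _ hij
          exact Fin.val_injective hij
        · intro j hj
          simp only [Finset.mem_range, lt_min_iff] at hj
          exact ⟨⟨j, hj.2⟩, by simp; omega, rfl⟩
      rw [h1, h2, Finset.card_range]
    have hA1 : A.card ≤ n := by
      refine le_trans (Finset.card_le_card_of_injOn (t := Finset.Icc 1 n)
        (fun a => NS S v (((S (v, a)) : ℕ) + 1)) ?_ ?_) ?_
      · exact fun a ha => by
          rw [hA, Finset.mem_coe, Finset.mem_filter] at ha
          refine Finset.mem_Icc.2 ⟨?_, ha.2⟩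
          exact Finset.card_pos.2 ⟨a, Finset.mem_filter.2 ⟨Finset.mem_univ a, le_refl _⟩⟩
      · -- injectivity
        have key : ∀ x y : X, ((S (v, x)) : ℕ) < ((S (v, y)) : ℕ) →
            NS S v (((S (v, x)) : ℕ) + 1) < NS S v (((S (v, y)) : ℕ) + 1) := by
          intro x y hxy
          refine Finset.card_lt_card (s := Finset.univ.filter
              (fun w : X => ((S (v, w)) : ℕ) + 1 ≤ ((S (v, x)) : ℕ) + 1)) ?_
          rw [Finset.ssubset_iff_of_subset]
          · exact ⟨y, Finset.mem_filter.2 ⟨Finset.mem_univ y, le_refl _⟩,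
              fun hy => by simp only [Finset.mem_filter] at hy; omega⟩
          · intro z hz
            simp only [Finset.mem_filter] at hz ⊢
            exact ⟨hz.1, by omega⟩
        intro a _ b _ hab
        rcases lt_trichotomy ((S (v, a)) : ℕ) ((S (v, b)) : ℕ) with hlt | heq | hgt
        · exact absurd hab (Nat.ne_of_lt (key a b hlt))
        · have : (v, a) = (v, b) := S.injective (Fin.val_injective heq)
          exact congrArg Prod.snd this
        · exact absurd hab.symm (Nat.ne_of_lt (key b a hgt))
      · rw [Nat.card_Icc]; omega
    have hA2 : A.card ≤ M := by
      refine le_trans (Finset.card_filter_le _ _) ?_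
      rw [Finset.card_univ, hM]
    omega
  · intro a haA haB b hbB hbA
    by_contra hcon
    push_neg at hcon
    have hlt := hGv v a b hcon
    rw [Fin.lt_def] at hlt
    rw [hB, Finset.mem_filter] at haB hbB
    simp only [Finset.mem_univ, true_and] at haB hbB
    omega


/-- If each `Gv v` is a single-user optimal (most-likely-first)
strategy for user `v`, then for independent users the random variable
`Gopt (U, V, W)` is stochastically dominated by the guesswork
`GS (U, V, W)` of every multi-user strategy `S`. -/
theorem Gopt_stochastically_dominated
    {V M : ℕ} {X : Type*} [Fintype X] [DecidableEq X]
    (hM : Fintype.card X = M)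
    (p : Fin V → X → ℝ) (hp : ∀ v w, 0 ≤ p v w) (hp1 : ∀ v, ∑ w, p v w = 1)
    (Gv : Fin V → (X ≃ Fin M))
    (hGv : ∀ v w w', p v w > p v w' → Gv v w < Gv v w')
    (S : Fin V × X ≃ Fin (V * M)) (U : ℕ) (hU1 : 1 ≤ U) (hUV : U ≤ V)
    (n : ℕ) :
    ∑ w ∈ Finset.univ.filter (fun w : Fin V → X => GS S U w ≤ n),
        ∏ v, p v (w v) ≤
      ∑ w ∈ Finset.univ.filter (fun w : Fin V → X => Gopt Gv U w ≤ n),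
        ∏ v, p v (w v) := by
  classical
  have step1 : Finset.univ.filter (fun w : Fin V → X => GS S U w ≤ n)
      ⊆ EVfin U n (fun v a => NS S v (((S (v, a)) : ℕ) + 1)) := by
    intro w hw
    rw [Finset.mem_filter] at hw
    rw [EVfin, Finset.mem_filter]
    exact ⟨Finset.mem_univ w, GS_mem S U hU1 hUV w n hw.2⟩
  have h1 : ∑ w ∈ Finset.univ.filter (fun w : Fin V → X => GS S U w ≤ n),
        ∏ v, p v (w v) ≤ PP p U n (fun v a => NS S v (((S (v, a)) : ℕ) + 1)) :=
    Finset.sum_le_sum_of_subset_of_nonneg step1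
      (fun w _ _ => Finset.prod_nonneg fun v _ => hp v _)
  have h2 : PP p U n (fun v a => NS S v (((S (v, a)) : ℕ) + 1))
      ≤ PP p U n (fun v a => ((Gv v a) : ℕ) + 1) :=
    PP_mono p hp U n _ _ (fun v => single_user hM p hp Gv hGv S v n)
  have h3 : PP p U n (fun v a => ((Gv v a) : ℕ) + 1)
      = ∑ w ∈ Finset.univ.filter (fun w : Fin V → X => Gopt Gv U w ≤ n),
        ∏ v, p v (w v) := by
    rw [PP, EVfin]
    congr 1
    refine Finset.filter_congr fun w _ => ?_
    rw [Gopt]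
    exact (uminN_le_iff hU1 hUV _).symm
  exact h1.trans (h2.trans_eq h3)
end

section
/- For any multi-user strategy S and any w = (w^(1),...,w^(V)), G_S(U,V,w) ≥ U-min(N_S(1,S(1,w^(1))), ..., N_S(V,S(V,w^(V)))). -/
lemma filter_card_eq_countP {V : ℕ} (x : Fin V → ℕ) (p : ℕ → Prop) [DecidablePred p] :
    (Finset.univ.filter (fun v => p (x v))).card
      = ((Finset.univ.val.map x).sort (· ≤ ·)).countP (fun a => decide (p a)) := by
  rw [← Multiset.coe_countP, Multiset.sort_eq, Multiset.countP_map]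
  simp [Finset.card_filter, Multiset.countP_eq_card_filter, Finset.filter]

lemma list_countP_le_ge {l : List ℕ} (hs : l.Pairwise (· ≤ ·)) {U : ℕ} (hU1 : 1 ≤ U)
    (hUV : U ≤ l.length) (h1 : U - 1 < l.length) :
    U ≤ l.countP (fun a => decide (a ≤ l[U-1])) := by
  obtain ⟨s, hsv⟩ : ∃ s, s = l[U-1] := ⟨_, rfl⟩
  rw [← hsv]
  calc U = (l.take U).length := by rw [List.length_take]; omega
    _ = (l.take U).countP (fun a => decide (a ≤ s)) := by
        rw [eq_comm, List.countP_eq_length]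
        intro a ha
        obtain ⟨i, hi, rfl⟩ := List.getElem_of_mem ha
        rw [List.length_take] at hi
        have hi' : i < l.length := by omega
        rw [List.getElem_take]
        have : l[i] ≤ l[U-1] :=
          hs.rel_get_of_le (a := ⟨i, hi'⟩) (b := ⟨U-1, h1⟩) (by simp [Fin.le_def]; omega)
        simp [hsv, this]
    _ ≤ l.countP (fun a => decide (a ≤ s)) := by
        conv_rhs => rw [← List.take_append_drop U l]
        rw [List.countP_append]; omega

lemma list_countP_lt_le {l : List ℕ} (hs : l.Pairwise (· ≤ ·)) {U : ℕ} (hU1 : 1 ≤ U)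
    (h1 : U - 1 < l.length) :
    l.countP (fun a => decide (a < l[U-1])) ≤ U - 1 := by
  obtain ⟨s, hsv⟩ : ∃ s, s = l[U-1] := ⟨_, rfl⟩
  rw [← hsv]
  conv_lhs => rw [← List.take_append_drop (U-1) l, List.countP_append]
  have h2 : (l.drop (U-1)).countP (fun a => decide (a < s)) = 0 := by
    rw [List.countP_eq_zero]
    intro a ha
    obtain ⟨i, hi, rfl⟩ := List.getElem_of_mem ha
    rw [List.length_drop] at hi
    have key : (l.drop (U-1))[i] = l[U-1+i]'(by omega) := by
      rw [List.getElem_drop]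
    have : l[U-1] ≤ l[U-1+i]'(by omega) :=
      hs.rel_get_of_le (a := ⟨U-1, h1⟩) (b := ⟨U-1+i, by omega⟩) (by simp [Fin.le_def])
    rw [hsv]; simp only [key, decide_eq_true_eq]
    omega
  have h3 : (l.take (U-1)).countP (fun a => decide (a < s)) ≤ U - 1 :=
    le_trans List.countP_le_length (by rw [List.length_take]; omega)
  omega

lemma umin_count_ge {V U : ℕ} (hU1 : 1 ≤ U) (hUV : U ≤ V) (x : Fin V → ℕ) :
    U ≤ (Finset.univ.filter (fun v => x v ≤ uminN U x)).card := by
  have hlen : ((Finset.univ.val.map x).sort (· ≤ ·)).length = V := by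
    simp [Multiset.length_sort]
  have h1 : U - 1 < ((Finset.univ.val.map x).sort (· ≤ ·)).length := by omega
  have hgd : uminN U x = ((Finset.univ.val.map x).sort (· ≤ ·))[U-1] :=
    List.getD_eq_getElem _ 0 h1
  rw [filter_card_eq_countP x (fun a => a ≤ uminN U x), hgd]
  exact list_countP_le_ge (Multiset.pairwise_sort _ _) hU1 (by omega) h1

lemma umin_le_of_card {V U : ℕ} (hU1 : 1 ≤ U) (hUV : U ≤ V) (x : Fin V → ℕ)
    (A : Finset (Fin V)) (hA : U ≤ A.card) : ∃ v ∈ A, uminN U x ≤ x v := by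
  by_contra h
  push_neg at h
  have hsub : A ⊆ Finset.univ.filter (fun v => x v < uminN U x) := by
    intro v hv; simp [h v hv]
  have hlen : ((Finset.univ.val.map x).sort (· ≤ ·)).length = V := by
    simp [Multiset.length_sort]
  have h1 : U - 1 < ((Finset.univ.val.map x).sort (· ≤ ·)).length := by omega
  have hgd : uminN U x = ((Finset.univ.val.map x).sort (· ≤ ·))[U-1] :=
    List.getD_eq_getElem _ 0 h1
  have hcard := (Finset.card_le_card hsub).trans_eq
    (filter_card_eq_countP x (fun a => a < uminN U x))
  rw [hgd] at hcard
  have := list_countP_lt_le (Multiset.pairwise_sort _ _) hU1 h1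
  omega
/-- For any multi-user strategy `S` and any vector of strings
`w`, `G_S(U,V,w) ≥ U-min(N_S(1,S(1,w⁽¹⁾)),…,N_S(V,S(V,w⁽ⱽ⁾)))`. -/
theorem GS_ge_umin_NS
    {V M : ℕ} {X : Type*} [Fintype X] [DecidableEq X]
    (hM : Fintype.card X = M)
    (S : Fin V × X ≃ Fin (V * M)) (U : ℕ) (hU1 : 1 ≤ U) (hUV : U ≤ V)
    (w : Fin V → X) :
    uminN U (fun v => NS S v (((S (v, w v)) : ℕ) + 1)) ≤ GS S U w := by
  have hAcard : U ≤ (Finset.univ.filter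
      (fun v => ((S (v, w v)) : ℕ) + 1 ≤ TT S U w)).card :=
    umin_count_ge hU1 hUV (fun v => ((S (v, w v)) : ℕ) + 1)
  obtain ⟨v1, hv1A, hv1⟩ := umin_le_of_card hU1 hUV
    (fun v => NS S v (((S (v, w v)) : ℕ) + 1)) _ hAcard
  have hv1' : ((S (v1, w v1)) : ℕ) + 1 ≤ TT S U w := (Finset.mem_filter.mp hv1A).2
  calc uminN U (fun v => NS S v (((S (v, w v)) : ℕ) + 1))
      ≤ NS S v1 (((S (v1, w v1)) : ℕ) + 1) := hv1
    _ = NS S v1 (min (((S (v1, w v1)) : ℕ) + 1) (TT S U w)) := by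
        rw [min_eq_left hv1']
    _ ≤ GS S U w := by
        rw [GS]
        exact Finset.single_le_sum
          (f := fun v => NS S v (min (((S (v, w v)) : ℕ) + 1) (TT S U w)))
          (fun v _ => Nat.zero_le _) (Finset.mem_univ v1)
end

section
/- Let Λ : ℝ → ℝ be convex with Λ(0) = 0. Then the sequence n ↦ (n+1)Λ(1/(n+1)) − (n+2)Λ(1/(n+2)) is nonnegative and nonincreasing in n ∈ ℕ. Equivalently, n ↦ (n+1)Λ(1/(n+1)) is nonincreasing and convex as a function of n. -/
/-- For convex `Λ` with `Λ(0) = 0`, the sequence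
`f n = (n+1)·Λ(1/(n+1))` is nonincreasing and the difference sequence
`f n − f (n+1)` is nonnegative and nonincreasing (so `f` is convex in `n`):
the law of diminishing returns. -/
theorem diminishing_returns (Λ : ℝ → ℝ) (hΛ : ConvexOn ℝ Set.univ Λ)
    (h0 : Λ 0 = 0) :
    (∀ n : ℕ, 0 ≤ ((n : ℝ) + 1) * Λ (1 / ((n : ℝ) + 1)) -
        ((n : ℝ) + 2) * Λ (1 / ((n : ℝ) + 2))) ∧
    (∀ n : ℕ, ((n : ℝ) + 2) * Λ (1 / ((n : ℝ) + 2)) -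
        ((n : ℝ) + 3) * Λ (1 / ((n : ℝ) + 3)) ≤
      ((n : ℝ) + 1) * Λ (1 / ((n : ℝ) + 1)) -
        ((n : ℝ) + 2) * Λ (1 / ((n : ℝ) + 2))) := by
  constructor
  · intro n
    have hn1 : (0:ℝ) < (n:ℝ)+1 := by positivity
    have hn2 : (0:ℝ) < (n:ℝ)+2 := by positivity
    have ha : (0:ℝ) ≤ ((n:ℝ)+1)/((n:ℝ)+2) := by positivity
    have hb : (0:ℝ) ≤ 1/((n:ℝ)+2) := by positivity
    have hab : ((n:ℝ)+1)/((n:ℝ)+2) + 1/((n:ℝ)+2) = 1 := by field_simp; ring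
    have key := hΛ.2 (Set.mem_univ (1/((n:ℝ)+1))) (Set.mem_univ (0:ℝ))
      ha hb hab
    simp only [smul_eq_mul, mul_zero, add_zero, h0] at key
    have heq : ((n:ℝ)+1)/((n:ℝ)+2) * (1/((n:ℝ)+1)) = 1/((n:ℝ)+2) := by
      field_simp
    rw [heq] at key
    have := mul_le_mul_of_nonneg_left key hn2.le
    have heq2 : ((n:ℝ)+2) * (((n:ℝ)+1)/((n:ℝ)+2) * Λ (1/((n:ℝ)+1)))
        = ((n:ℝ)+1) * Λ (1/((n:ℝ)+1)) := by field_simp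
    rw [heq2] at this
    linarith
  · intro n
    have hn1 : (0:ℝ) < (n:ℝ)+1 := by positivity
    have hn2 : (0:ℝ) < (n:ℝ)+2 := by positivity
    have hn3 : (0:ℝ) < (n:ℝ)+3 := by positivity
    have ha : (0:ℝ) ≤ ((n:ℝ)+1)/(2*((n:ℝ)+2)) := by positivity
    have hb : (0:ℝ) ≤ ((n:ℝ)+3)/(2*((n:ℝ)+2)) := by positivity
    have hab : ((n:ℝ)+1)/(2*((n:ℝ)+2)) + ((n:ℝ)+3)/(2*((n:ℝ)+2)) = 1 := by
      field_simp; ring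
    have key := hΛ.2 (Set.mem_univ (1/((n:ℝ)+1))) (Set.mem_univ (1/((n:ℝ)+3)))
      ha hb hab
    simp only [smul_eq_mul] at key
    have heq : ((n:ℝ)+1)/(2*((n:ℝ)+2)) * (1/((n:ℝ)+1))
        + ((n:ℝ)+3)/(2*((n:ℝ)+2)) * (1/((n:ℝ)+3)) = 1/((n:ℝ)+2) := by
      field_simp; ring
    rw [heq] at key
    have h2 := mul_le_mul_of_nonneg_left key (by positivity :
      (0:ℝ) ≤ 2*((n:ℝ)+2))
    have heq2 : 2*((n:ℝ)+2) * (((n:ℝ)+1)/(2*((n:ℝ)+2)) * Λ (1/((n:ℝ)+1))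
        + ((n:ℝ)+3)/(2*((n:ℝ)+2)) * Λ (1/((n:ℝ)+3)))
        = ((n:ℝ)+1) * Λ (1/((n:ℝ)+1)) + ((n:ℝ)+3) * Λ (1/((n:ℝ)+3)) := by
      field_simp
    rw [heq2] at h2
    linarith
end

section
/- Let Λ : ℝ → ℝ be convex with Λ(0) = 0, let Λ* be its Legendre–Fenchel transform, h a point with Λ*(h) = 0, and define Ψ(x) = UΛ*(x) for x ≤ h and Ψ(x) = (V−U+1)Λ*(x) for x ≥ h. Then the Legendre–Fenchel transform of Ψ satisfies Ψ*(α) = U·Λ(α/U) for α ≤ 0 and Ψ*(α) = (V−U+1)·Λ(α/(V−U+1)) for α ≥ 0. -/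
private lemma tangent_le (Λ : ℝ → ℝ) (hconv : ConvexOn ℝ Set.univ Λ)
    (hdiff : Differentiable ℝ Λ) (β γ : ℝ) :
    Λ β + deriv Λ β * (γ - β) ≤ Λ γ := by
  rcases lt_trichotomy β γ with hlt | rfl | hgt
  · have h1 := hconv.deriv_le_slope (Set.mem_univ β) (Set.mem_univ γ) hlt (hdiff β)
    rw [slope_def_field] at h1
    have h2 : deriv Λ β * (γ - β) ≤ Λ γ - Λ β := by
      have hpos : 0 < γ - β := by linarith
      calc deriv Λ β * (γ - β) ≤ (Λ γ - Λ β) / (γ - β) * (γ - β) := by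
            exact mul_le_mul_of_nonneg_right h1 hpos.le
        _ = Λ γ - Λ β := by field_simp
    linarith
  · simp
  · have h1 := hconv.slope_le_deriv (Set.mem_univ γ) (Set.mem_univ β) hgt (hdiff β)
    rw [slope_def_field] at h1
    have hpos : 0 < β - γ := by linarith
    have h2 : Λ β - Λ γ ≤ deriv Λ β * (β - γ) := by
      calc Λ β - Λ γ = (Λ β - Λ γ) / (β - γ) * (β - γ) := by field_simp
        _ ≤ deriv Λ β * (β - γ) := by
            exact mul_le_mul_of_nonneg_right h1 hpos.le
    nlinarith

/-- Let `Λ : ℝ → ℝ` be convex and differentiable with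
`Λ(0) = 0` and `Λ'(0) = h`, and let `Λ*` be its Legendre–Fenchel transform
(`Λstar x` is the least upper bound of `{αx − Λ(α) : α ∈ ℝ}`), so that
`Λ*(h) = 0`.  For `1 ≤ U ≤ V` define
`Ψ(x) = U·Λ*(x)` for `x ≤ h` and `Ψ(x) = (V−U+1)·Λ*(x)` for `x ≥ h`.
Then the Legendre–Fenchel transform of `Ψ` satisfies
`Ψ*(α) = U·Λ(α/U)` for `α ≤ 0` and `Ψ*(α) = (V−U+1)·Λ(α/(V−U+1))`
for `α ≥ 0`. -/
theorem multiuser_sCGF_identical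
    (Λ : ℝ → ℝ) (hconv : ConvexOn ℝ Set.univ Λ) (h0 : Λ 0 = 0)
    (hdiff : Differentiable ℝ Λ) (h : ℝ) (hderiv : deriv Λ 0 = h)
    (Λstar : ℝ → ℝ)
    (hΛstar : ∀ x, IsLUB {y : ℝ | ∃ α : ℝ, y = α * x - Λ α} (Λstar x))
    (hzero : Λstar h = 0)
    (U V : ℕ) (hU1 : 1 ≤ U) (hUV : U ≤ V)
    (Ψ : ℝ → ℝ)
    (hΨle : ∀ x ≤ h, Ψ x = (U : ℝ) * Λstar x)
    (hΨge : ∀ x, h ≤ x → Ψ x = ((V : ℝ) - U + 1) * Λstar x) :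
    (∀ α : ℝ, α ≤ 0 →
      IsLUB {y : ℝ | ∃ x : ℝ, y = α * x - Ψ x} ((U : ℝ) * Λ (α / U))) ∧
    (∀ α : ℝ, 0 ≤ α →
      IsLUB {y : ℝ | ∃ x : ℝ, y = α * x - Ψ x}
        (((V : ℝ) - U + 1) * Λ (α / ((V : ℝ) - U + 1)))) := by
  have hU : (0:ℝ) < U := by exact_mod_cast hU1
  have hW : (0:ℝ) < (V:ℝ) - U + 1 := by
    have : (U:ℝ) ≤ V := by exact_mod_cast hUV
    linarith
  -- Λstar is nonnegative
  have hnonneg : ∀ x, 0 ≤ Λstar x := by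
    intro x
    have : (0:ℝ) ∈ {y : ℝ | ∃ α : ℝ, y = α * x - Λ α} := ⟨0, by simp [h0]⟩
    exact (hΛstar x).1 this
  -- the Fenchel–Young lower bound
  have hlb : ∀ β x, β * x - Λ β ≤ Λstar x := fun β x => (hΛstar x).1 ⟨β, rfl⟩
  -- equality at x = Λ'(β)
  have heq : ∀ β, Λstar (deriv Λ β) = β * deriv Λ β - Λ β := by
    intro β
    refine le_antisymm ?_ (hlb β _)
    refine (hΛstar (deriv Λ β)).2 ?_
    rintro y ⟨γ, rfl⟩
    have := tangent_le Λ hconv hdiff β γ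
    nlinarith
  -- monotonicity of the derivative
  have hmono : ∀ a b : ℝ, a ≤ b → deriv Λ a ≤ deriv Λ b := fun a b hab =>
    hconv.monotoneOn_deriv (fun x _ => hdiff x) (Set.mem_univ a) (Set.mem_univ b) hab
  constructor
  · -- α ≤ 0
    intro α hα
    have hβ : α / U ≤ 0 := div_nonpos_of_nonpos_of_nonneg hα hU.le
    set β := α / U with hβdef
    have hαβ : α = (U:ℝ) * β := by rw [hβdef]; field_simp
    set x₀ := deriv Λ β with hx₀def
    have hx₀ : x₀ ≤ h := hderiv ▸ hmono β 0 hβ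
    have hmem : (U:ℝ) * Λ β = α * x₀ - Ψ x₀ := by
      rw [hΨle x₀ hx₀, heq β, hαβ]; ring
    constructor
    · rintro y ⟨x, rfl⟩
      rcases le_total x h with hx | hx
      · rw [hΨle x hx]
        have e := mul_le_mul_of_nonneg_left (hlb β x) hU.le
        rw [hαβ]; nlinarith [e]
      · rw [hΨge x hx]
        have h1 := hlb β h
        have h2 := hnonneg x
        rw [hzero] at h1
        have e1 : α * x ≤ α * h := by nlinarith
        have e2 : α * h ≤ (U:ℝ) * Λ β := by
          rw [hαβ, mul_assoc]
          exact mul_le_mul_of_nonneg_left (by linarith) hU.le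
        have e3 : 0 ≤ ((V:ℝ) - U + 1) * Λstar x := mul_nonneg hW.le h2
        linarith
    · intro b hb
      exact hmem ▸ hb ⟨x₀, rfl⟩
  · -- α ≥ 0
    intro α hα
    set W := (V:ℝ) - U + 1 with hWdef
    have hβ : 0 ≤ α / W := div_nonneg hα hW.le
    set β := α / W with hβdef
    have hαβ : α = W * β := by rw [hβdef]; field_simp
    set x₀ := deriv Λ β with hx₀def
    have hx₀ : h ≤ x₀ := hderiv ▸ hmono 0 β hβ
    have hmem : W * Λ β = α * x₀ - Ψ x₀ := by
      rw [hΨge x₀ hx₀, heq β, hαβ]; ring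
    constructor
    · rintro y ⟨x, rfl⟩
      rcases le_total x h with hx | hx
      · rw [hΨle x hx]
        have h1 := hlb β h
        have h2 := hnonneg x
        rw [hzero] at h1
        have e1 : α * x ≤ α * h := by nlinarith
        have e2 : α * h ≤ W * Λ β := by
          rw [hαβ, mul_assoc]
          exact mul_le_mul_of_nonneg_left (by linarith) hW.le
        have e3 : 0 ≤ (U:ℝ) * Λstar x := mul_nonneg hU.le h2
        linarith
      · rw [hΨge x hx]
        have e := mul_le_mul_of_nonneg_left (hlb β x) hW.le
        rw [hαβ]; nlinarith [e]
    · intro b hb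
      exact hmem ▸ hb ⟨x₀, rfl⟩
end
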